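/- Let h̄ > 0, ε > 0, and let a : [0,∞) → [0,∞) be a strictly increasing continuous bijection onto [0,∞) (so a⁻¹ is well-defined). Define ϑ_ε(t) = ∫_0^t a⁻¹(2h̄ε − h̄s) ds for t ∈ [0, ε] and v̄_ε(x₁, x₂) = ϑ_ε(k + ε − x₂) on the strip {k < x₂ < k + ε}. Then v̄_ε satisfies Δ_A v̄_ε = −h̄ in the strip, i.e., div((a(|∇v̄_ε|)/|∇v̄_ε|)·∇v̄_ε) = −h̄ wherever ∇v̄_ε ≠ 0. -/

import Mathlib

set_option maxHeartbeats 2000000 in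
/-- The barrier `v̄_ε(x) = ϑ_ε(k + ε − x₂)`, with `ϑ_ε(t) = ∫_0^t a⁻¹(2hMε − hM s) ds`,
satisfies `Δ_A v̄_ε = −hM` in the strip `{k < x₂ < k + ε}`, i.e. the divergence of the
flux `(a(|∇v̄_ε|)/|∇v̄_ε|) ∇v̄_ε` equals `−hM` there. Here `b = a⁻¹`. -/
theorem stmt_6 (a b : ℝ → ℝ) (hM ε k : ℝ) (hM_pos : 0 < hM) (hε : 0 < ε)
    (ha00 : a 0 = 0) (hamono : StrictMonoOn a (Set.Ici 0))
    (haC1 : ContDiffOn ℝ 1 a (Set.Ici 0))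
    (hann : ∀ t, 0 ≤ t → 0 ≤ a t)
    (hinv : ∀ t, 0 ≤ t → a (b t) = t ∧ b (a t) = t ∧ 0 ≤ b t)
    (vbar : EuclideanSpace ℝ (Fin 2) → ℝ)
    (hvbar : vbar = fun x => ∫ s in (0:ℝ)..(k + ε - x 1), b (2 * hM * ε - hM * s)) :
    ∀ x : EuclideanSpace ℝ (Fin 2), k < x 1 → x 1 < k + ε →
      (∑ i : Fin 2,
        fderiv ℝ
          (fun y => (a ‖gradient vbar y‖ / ‖gradient vbar y‖) • gradient vbar y) x
          (EuclideanSpace.single i 1) i) = -hM := by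
  subst hvbar
  intro x hx1 hx2
  have E_def : True := trivial
  set e : EuclideanSpace ℝ (Fin 2) := EuclideanSpace.single (1 : Fin 2) (1 : ℝ) with he
  set L : EuclideanSpace ℝ (Fin 2) →L[ℝ] ℝ := EuclideanSpace.proj (1 : Fin 2) with hL
  -- basic facts about b
  have hbpos : ∀ t, 0 < t → 0 < b t := by
    intro t ht
    rcases hinv t ht.le with ⟨hab, _, hbt⟩
    rcases hbt.lt_or_eq with h | h
    · exact h
    · exfalso; rw [← h, ha00] at hab; exact ht.ne hab
  have hbmono : StrictMonoOn b (Set.Ioi 0) := by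
    intro s hs t ht hst
    by_contra hle
    push_neg at hle
    have h1 : a (b t) ≤ a (b s) :=
      hamono.monotoneOn (hinv t (le_of_lt ht)).2.2 (hinv s (le_of_lt hs)).2.2 hle
    rw [(hinv t (le_of_lt ht)).1, (hinv s (le_of_lt hs)).1] at h1
    exact absurd hst (not_lt.2 h1)
  have hbcont : ∀ t, 0 < t → ContinuousAt b t := by
    intro t ht
    have himg : b '' Set.Ioi 0 = Set.Ioi 0 := by
      apply Set.Subset.antisymm
      · rintro u ⟨s, hs, rfl⟩
        exact hbpos s hs
      · intro u hu
        have hau : 0 < a u := by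
          have := hamono Set.self_mem_Ici (Set.mem_Ici.mpr (le_of_lt hu)) hu
          rwa [ha00] at this
        exact ⟨a u, hau, (hinv u (le_of_lt hu)).2.1⟩
    refine hbmono.continuousAt_of_image_mem_nhds (isOpen_Ioi.mem_nhds ht) ?_
    rw [himg]
    exact isOpen_Ioi.mem_nhds (hbpos t ht)
  -- the gradient of vbar on the strip
  have hgrad : ∀ y : EuclideanSpace ℝ (Fin 2), k < y 1 → y 1 < k + ε →
      HasGradientAt (fun x : EuclideanSpace ℝ (Fin 2) => ∫ s in (0:ℝ)..(k + ε - x 1), b (2 * hM * ε - hM * s))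
        ((-(b (hM * ε + hM * (y 1 - k)))) • e) y := by
    intro y h1 h2
    set u₀ : ℝ := k + ε - y 1 with hu₀
    have hu₀pos : 0 < u₀ := by simp [hu₀]; linarith
    have hu₀lt : u₀ < ε := by simp [hu₀]; linarith
    set φ : ℝ → ℝ := fun s => b (2 * hM * ε - hM * s) with hφ
    have hφc : ∀ s ∈ Set.Iio (2 * ε), ContinuousAt φ s := by
      intro s hs
      have harg : 0 < 2 * hM * ε - hM * s := by
        have : s < 2 * ε := hs
        nlinarith
      have hcin : ContinuousAt (fun s : ℝ => 2 * hM * ε - hM * s) s := by fun_prop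
      exact ContinuousAt.comp (g := b) (f := fun s : ℝ => 2 * hM * ε - hM * s) (hbcont _ harg) hcin
    have hmem : u₀ ∈ Set.Iio (2 * ε) := by
      simp only [Set.mem_Iio]; linarith
    have hint : IntervalIntegrable φ MeasureTheory.volume 0 u₀ := by
      apply ContinuousOn.intervalIntegrable
      intro s hs
      have hs' : s ∈ Set.Iio (2 * ε) := by
        rcases hs with ⟨hsl, hsr⟩
        simp only [Set.mem_Iio]
        have : s ≤ max 0 u₀ := hsr
        have : max 0 u₀ ≤ u₀ := by simp [le_of_lt hu₀pos]
        linarith [le_trans hsr this]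
      exact (hφc s hs').continuousWithinAt
    have hmeas : StronglyMeasurableAtFilter φ (nhds u₀) MeasureTheory.volume :=
      ContinuousAt.stronglyMeasurableAtFilter isOpen_Iio hφc u₀ hmem
    have hH : HasDerivAt (fun u => ∫ s in (0:ℝ)..u, φ s) (φ u₀) u₀ :=
      intervalIntegral.integral_hasDerivAt_right hint hmeas (hφc u₀ hmem)
    have hlin : HasFDerivAt (fun y : EuclideanSpace ℝ (Fin 2) => k + ε - y 1) (-L) y := by
      have : HasFDerivAt (fun y : EuclideanSpace ℝ (Fin 2) => y 1) L y := L.hasFDerivAt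
      exact this.const_sub (k + ε)
    have hF : HasFDerivAt (fun x : EuclideanSpace ℝ (Fin 2) => ∫ s in (0:ℝ)..(k + ε - x 1), b (2 * hM * ε - hM * s))
        ((φ u₀) • (-L)) y := by have := hH.comp_hasFDerivAt y hlin; exact this
    have hargeq : 2 * hM * ε - hM * u₀ = hM * ε + hM * (y 1 - k) := by
      simp only [hu₀]; ring
    rw [hasGradientAt_iff_hasFDerivAt]
    have hdual : (InnerProductSpace.toDual ℝ (EuclideanSpace ℝ (Fin 2))) ((-(b (hM * ε + hM * (y 1 - k)))) • e)
        = (φ u₀) • (-L) := by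
      apply ContinuousLinearMap.ext
      intro v
      have hφeq : φ u₀ = b (hM * ε + hM * (y 1 - k)) := by
        simp only [hφ]; rw [hargeq]
      simp only [InnerProductSpace.toDual_apply_apply, ContinuousLinearMap.smul_apply,
        ContinuousLinearMap.neg_apply, hφeq, real_inner_smul_left, he,
        EuclideanSpace.inner_single_left, map_one, one_mul, smul_eq_mul]
      have h1 : L v = v 1 := rfl
      rw [h1]
      ring_nf
    rw [hdual]
    exact hF
  -- value of the flux on the strip
  have hflux : ∀ y : EuclideanSpace ℝ (Fin 2), k < y 1 → y 1 < k + ε →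
      (a ‖gradient (fun x : EuclideanSpace ℝ (Fin 2) => ∫ s in (0:ℝ)..(k + ε - x 1), b (2 * hM * ε - hM * s)) y‖ /
        ‖gradient (fun x : EuclideanSpace ℝ (Fin 2) => ∫ s in (0:ℝ)..(k + ε - x 1), b (2 * hM * ε - hM * s)) y‖) •
        gradient (fun x : EuclideanSpace ℝ (Fin 2) => ∫ s in (0:ℝ)..(k + ε - x 1), b (2 * hM * ε - hM * s)) y
      = (-(hM * ε + hM * (y 1 - k))) • e := by
    intro y h1 h2
    have hge : gradient (fun x : EuclideanSpace ℝ (Fin 2) => ∫ s in (0:ℝ)..(k + ε - x 1), b (2 * hM * ε - hM * s)) y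
        = (-(b (hM * ε + hM * (y 1 - k)))) • e := (hgrad y h1 h2).gradient
    set arg : ℝ := hM * ε + hM * (y 1 - k) with harg
    have hargpos : 0 < arg := by
      have : 0 < hM * (y 1 - k) := by nlinarith
      nlinarith
    obtain ⟨hac, -, hcnn⟩ := hinv arg (le_of_lt hargpos)
    have hcpos : 0 < b arg := hbpos arg hargpos
    have hnorme : ‖e‖ = 1 := by
      rw [he, EuclideanSpace.norm_single, norm_one]
    have hnorm : ‖(-(b arg)) • e‖ = b arg := by
      rw [norm_smul, hnorme, mul_one, Real.norm_eq_abs, abs_neg, abs_of_pos hcpos]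
    rw [hge, hnorm, hac, smul_smul]
    congr 1
    field_simp
  -- the strip is open; replace the flux by its explicit form
  set S : Set (EuclideanSpace ℝ (Fin 2)) := {y : EuclideanSpace ℝ (Fin 2) | k < y 1 ∧ y 1 < k + ε} with hS
  have hSopen : IsOpen S := by
    have : S = L ⁻¹' (Set.Ioo k (k + ε)) := rfl
    rw [this]
    exact isOpen_Ioo.preimage L.continuous
  have hxS : x ∈ S := ⟨hx1, hx2⟩
  set F : EuclideanSpace ℝ (Fin 2) → EuclideanSpace ℝ (Fin 2) := fun y => (-(hM * ε + hM * (y 1 - k))) • e with hF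
  have heq : (fun y : EuclideanSpace ℝ (Fin 2) =>
      (a ‖gradient (fun x : EuclideanSpace ℝ (Fin 2) => ∫ s in (0:ℝ)..(k + ε - x 1), b (2 * hM * ε - hM * s)) y‖ /
        ‖gradient (fun x : EuclideanSpace ℝ (Fin 2) => ∫ s in (0:ℝ)..(k + ε - x 1), b (2 * hM * ε - hM * s)) y‖) •
        gradient (fun x : EuclideanSpace ℝ (Fin 2) => ∫ s in (0:ℝ)..(k + ε - x 1), b (2 * hM * ε - hM * s)) y)
      =ᶠ[nhds x] F := by
    apply Filter.eventuallyEq_of_mem (hSopen.mem_nhds hxS)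
    intro y hy
    exact hflux y hy.1 hy.2
  -- the derivative of F
  set A : EuclideanSpace ℝ (Fin 2) →L[ℝ] EuclideanSpace ℝ (Fin 2) := ((-hM) • L).smulRight e with hA
  have hFform : F = fun y => A y + (hM * k - hM * ε) • e := by
    funext y
    simp only [hF, hA, ContinuousLinearMap.smulRight_apply, ContinuousLinearMap.smul_apply,
      smul_eq_mul]
    have : L y = y 1 := rfl
    rw [this, ← add_smul]
    congr 1
    ring
  have hFd : HasFDerivAt F A x := by
    rw [hFform]
    exact (A.hasFDerivAt).add_const _
  rw [heq.fderiv_eq, hFd.fderiv]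
  -- compute the divergence of A
  rw [Fin.sum_univ_two]
  have hA0 : (A (EuclideanSpace.single (0 : Fin 2) 1)) 0 = 0 := by
    simp [hA, ContinuousLinearMap.smulRight_apply, he, EuclideanSpace.single_apply]
  have hA1 : (A (EuclideanSpace.single (1 : Fin 2) 1)) 1 = -hM := by
    have hL1 : L (EuclideanSpace.single (1 : Fin 2) 1) = 1 := by
      show (EuclideanSpace.single (1 : Fin 2) (1:ℝ)) 1 = 1
      simp [EuclideanSpace.single_apply]
    simp [hA, ContinuousLinearMap.smulRight_apply, hL1, he, EuclideanSpace.single_apply]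
  rw [hA0, hA1, zero_add]
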